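/- Let L be the inverse limit of the rings k[SL_{m,n}] ⊗_k k[δ_{m,n}] along the maps φ_{(m',n',m,n)} ⊗ e_{(m',n',m,n)}, realized as the subring of compatible families in ∏_{(m,n)} (k[SL_{m,n}] ⊗_k k[δ_{m,n}]). Then there is a unique ring homomorphism λ̂ : k̂[δ_∞] → L such that for every x = (x_{(m,n)}) ∈ k̂[δ_∞] and every (m,n), the (m,n)-component of λ̂(x) equals λ_{(m,n)}(x_{(m,n)}). (In particular the family (λ_{(m,n)}(x_{(m,n)}))_{(m,n)} is compatible, so that k̂[δ_∞] carries a coaction of k[SL_∞].) -/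

import Mathlib

open MvPolynomial TensorProduct

set_option maxHeartbeats 2000000
set_option synthInstance.maxHeartbeats 400000

noncomputable section

/-- Row indices of the generic `(m+n) × m` matrix: integers `-m, ..., n-1`. -/
abbrev RowI (m n : ℕ) : Type := ↥(Finset.Icc (-(m : ℤ)) ((n : ℤ) - 1))

/-- Column indices: integers `-m, ..., -1`. -/
abbrev ColI (m : ℕ) : Type := ↥(Finset.Icc (-(m : ℤ)) (-1 : ℤ))

/-- `k[a]_{m,n}`, the coordinate ring of generic `(m+n) × m` matrices. -/
abbrev MatRing (k : Type) [Field k] (m n : ℕ) : Type :=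
  MvPolynomial (RowI m n × ColI m) k

/-- The maximal minor `d_I` on the rows in `I` (an `m`-element subset of `{-m,...,n-1}`). -/
def dMinor (k : Type) [Field k] (m n : ℕ) (I : Finset ℤ) (hI : I.card = m)
    (hsub : I ⊆ Finset.Icc (-(m : ℤ)) ((n : ℤ) - 1)) : MatRing k m n :=
  Matrix.det (Matrix.of fun s t : Fin m =>
    (X (⟨I.orderEmbOfFin hI s, hsub (Finset.orderEmbOfFin_mem I hI s)⟩,
       ⟨-(m : ℤ) + (t : ℕ), by
          have := t.2
          simp only [Finset.mem_Icc]
          omega⟩) : MatRing k m n))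

/-- `k[δ_{m,n}]`, the subalgebra generated by all the maximal minors. -/
def DeltaSub (k : Type) [Field k] (m n : ℕ) : Subalgebra k (MatRing k m n) :=
  Algebra.adjoin k {x | ∃ I hI hsub, x = dMinor k m n I hI hsub}

/-- The substitution homomorphism `E_{(m',n',m,n)} : k[a]_{m',n'} → k[a]_{m,n}`. -/
def Emap (k : Type) [Field k] (m n m' n' : ℕ) : MatRing k m' n' →ₐ[k] MatRing k m n :=
  aeval fun p : RowI m' n' × ColI m' =>
    if h : (p.1.1 ∈ Finset.Icc (-(m : ℤ)) ((n : ℤ) - 1)) ∧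
        (p.2.1 ∈ Finset.Icc (-(m : ℤ)) (-1 : ℤ)) then
      (X (⟨p.1.1, h.1⟩, ⟨p.2.1, h.2⟩) : MatRing k m n)
    else if p.1.1 = p.2.1 then 1 else 0



open MvPolynomial TensorProduct

/-- Row/column indices of the generic `N × N` matrix, `N = m+n`:
the integers `-m, ..., n-1`. -/
abbrev SqIdx (m n : ℕ) : Type := ↥(Finset.Icc (-(m : ℤ)) ((n : ℤ) - 1))

/-- The determinant of the generic `N × N` matrix `(g_{i,j})`. -/
def genDet (k : Type) [Field k] (m n : ℕ) : MvPolynomial (SqIdx m n × SqIdx m n) k :=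
  Matrix.det (Matrix.of fun i j : SqIdx m n => (X (i, j) : MvPolynomial (SqIdx m n × SqIdx m n) k))

/-- `k[SL_{m,n}]`: the quotient of the polynomial ring in the `g_{i,j}` by `(det(g) - 1)`. -/
abbrev SLring (k : Type) [Field k] (m n : ℕ) : Type :=
  MvPolynomial (SqIdx m n × SqIdx m n) k ⧸ Ideal.span {genDet k m n - 1}

/-- The image of the generator `g_{i,j}` in `k[SL_{m,n}]`. -/
def gvar (k : Type) [Field k] (m n : ℕ) (i j : SqIdx m n) : SLring k m n :=
  Ideal.Quotient.mk _ (X (i, j))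

/-- The coaction `Λ_{(m,n)} : k[a]_{m,n} → k[SL_{m,n}] ⊗ k[a]_{m,n}`,
`a_{i,j} ↦ Σ_l g_{i,l} ⊗ a_{l,j}`. -/
def coactA (k : Type) [Field k] (m n : ℕ) :
    MatRing k m n →ₐ[k] SLring k m n ⊗[k] MatRing k m n :=
  aeval fun p : RowI m n × ColI m =>
    ∑ l : SqIdx m n, gvar k m n p.1 l ⊗ₜ[k] (X (l, p.2) : MatRing k m n)

/-- The inverse limit of an inverse system of rings, realized concretely as the
subring of the product consisting of the compatible families. -/
def ringInvLim {ι : Type*} [Preorder ι] (G : ι → Type*) [∀ i, Ring (G i)]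
    (f : ∀ i j : ι, i ≤ j → (G j →+* G i)) : Subring (∀ i, G i) where
  carrier := {x | ∀ (i j : ι) (h : i ≤ j), f i j h (x j) = x i}
  zero_mem' := by intro i j h; simp
  one_mem' := by intro i j h; simp
  add_mem' := by
    intro a b ha hb i j h
    simp only [Pi.add_apply, map_add, ha i j h, hb i j h]
  mul_mem' := by
    intro a b ha hb i j h
    simp only [Pi.mul_apply, map_mul, ha i j h, hb i j h]
  neg_mem' := by
    intro a ha i j h
    simp only [Pi.neg_apply, map_neg, ha i j h]

/-- The index set: pairs of positive integers, ordered componentwise. -/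
abbrev PIdx : Type := {p : ℕ × ℕ // 0 < p.1 ∧ 0 < p.2}

/-- `e_{(m',n',m,n)}` viewed as a map `k[δ_{m',n'}] → k[δ_{m,n}]`: its defining property
is that it is the restriction of the substitution homomorphism `E_{(m',n',m,n)}`. -/
def eProp (k : Type) [Field k]
    (eD : ∀ p q : PIdx, p ≤ q →
      (↥(DeltaSub k q.1.1 q.1.2) →ₐ[k] ↥(DeltaSub k p.1.1 p.1.2))) : Prop :=
  ∀ (p q : PIdx) (h : p ≤ q) (x : ↥(DeltaSub k q.1.1 q.1.2)),
    (eD p q h x : MatRing k p.1.1 p.1.2) =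
      Emap k p.1.1 p.1.2 q.1.1 q.1.2 (x : MatRing k q.1.1 q.1.2)

/-- The defining property of the system of transition maps
`φ_{(m',n',m,n)} : k[SL_{m',n'}] → k[SL_{m,n}]` on the generators. -/
def phiSysProp (k : Type) [Field k]
    (φ : ∀ p q : PIdx, p ≤ q → (SLring k q.1.1 q.1.2 →ₐ[k] SLring k p.1.1 p.1.2)) : Prop :=
  ∀ (p q : PIdx) (h : p ≤ q) (i j : SqIdx q.1.1 q.1.2),
    φ p q h (gvar k q.1.1 q.1.2 i j) =
      if h2 : (i.1 ∈ Finset.Icc (-(p.1.1 : ℤ)) ((p.1.2 : ℤ) - 1)) ∧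
          (j.1 ∈ Finset.Icc (-(p.1.1 : ℤ)) ((p.1.2 : ℤ) - 1)) then
        gvar k p.1.1 p.1.2 ⟨i.1, h2.1⟩ ⟨j.1, h2.2⟩
      else if i.1 = j.1 then 1 else 0
lemma tensor_val_inj (k A B : Type) [Field k] [CommRing A] [Algebra k A]
    [CommRing B] [Algebra k B] (S : Subalgebra k B) :
    Function.Injective (Algebra.TensorProduct.map (AlgHom.id k A) S.val) := by
  have h : (Algebra.TensorProduct.map (AlgHom.id k A) S.val).toLinearMap
      = LinearMap.lTensor A S.val.toLinearMap := by
    apply TensorProduct.ext'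
    intro a b
    rfl
  have h2 : Function.Injective (LinearMap.lTensor A S.val.toLinearMap) :=
    Module.Flat.lTensor_preserves_injective_linearMap _ Subtype.val_injective
  intro x y hxy
  apply h2
  rw [← h]
  exact hxy

lemma keyComm (k : Type) [Field k] (m n m' n' : ℕ) (hn0 : 0 < n) (hn0' : 0 < n')
    (hm : m ≤ m') (hn : n ≤ n')
    (φ0 : SLring k m' n' →ₐ[k] SLring k m n)
    (hφ0 : ∀ i j : SqIdx m' n', φ0 (gvar k m' n' i j) =
      if h2 : (i.1 ∈ Finset.Icc (-(m : ℤ)) ((n : ℤ) - 1)) ∧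
          (j.1 ∈ Finset.Icc (-(m : ℤ)) ((n : ℤ) - 1)) then
        gvar k m n ⟨i.1, h2.1⟩ ⟨j.1, h2.2⟩
      else if i.1 = j.1 then 1 else 0) :
    (Algebra.TensorProduct.map φ0 (Emap k m n m' n')).comp (coactA k m' n') =
      (coactA k m n).comp (Emap k m n m' n') := by
  apply MvPolynomial.algHom_ext
  rintro ⟨i, j⟩
  have hi' : i.1 ∈ Finset.Icc (-(m' : ℤ)) ((n' : ℤ) - 1) := i.2
  have hj' : j.1 ∈ Finset.Icc (-(m' : ℤ)) (-1 : ℤ) := j.2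
  simp only [AlgHom.comp_apply, coactA, Emap, aeval_X, map_sum,
    Algebra.TensorProduct.map_tmul, hφ0]
  by_cases hcj : j.1 ∈ Finset.Icc (-(m : ℤ)) (-1 : ℤ)
  · have hcjr : j.1 ∈ Finset.Icc (-(m : ℤ)) ((n : ℤ) - 1) := by
      simp only [Finset.mem_Icc] at hcj ⊢; omega
    by_cases hri : i.1 ∈ Finset.Icc (-(m : ℤ)) ((n : ℤ) - 1)
    · -- both in range
      rw [dif_pos ⟨hri, hcj⟩]
      simp only [coactA, aeval_X]
      symm
      refine Finset.sum_of_injOn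
        (fun l : SqIdx m n => (⟨l.1, by
          have := l.2; simp only [Finset.mem_Icc] at this ⊢; omega⟩ : SqIdx m' n'))
        ?_ ?_ ?_ ?_
      · intro a _ b _ hab
        simp only [Subtype.mk.injEq] at hab
        exact Subtype.ext hab
      · intro a _
        simp
      · intro l _ hl
        have hlr : l.1 ∉ Finset.Icc (-(m : ℤ)) ((n : ℤ) - 1) := by
          intro hmem
          exact hl ⟨⟨l.1, hmem⟩, by simp, rfl⟩
        have hc1 : ¬(l.1 ∈ Finset.Icc (-(m : ℤ)) ((n : ℤ) - 1) ∧
            j.1 ∈ Finset.Icc (-(m : ℤ)) (-1 : ℤ)) := fun hc => hlr hc.1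
        have hc2 : ¬(l.1 = j.1) := fun he => hlr (he ▸ hcjr)
        rw [dif_neg hc1, if_neg hc2, TensorProduct.tmul_zero]
      · intro l _
        have h1 : (i.1 ∈ Finset.Icc (-(m : ℤ)) ((n : ℤ) - 1) ∧
            (l.1 : ℤ) ∈ Finset.Icc (-(m : ℤ)) ((n : ℤ) - 1)) := ⟨hri, l.2⟩
        have h2 : ((l.1 : ℤ) ∈ Finset.Icc (-(m : ℤ)) ((n : ℤ) - 1) ∧
            j.1 ∈ Finset.Icc (-(m : ℤ)) (-1 : ℤ)) := ⟨l.2, hcj⟩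
        rw [dif_pos h1, dif_pos h2]
    · -- i out of range, j in range: both sides zero
      have hcn : ¬(i.1 ∈ Finset.Icc (-(m : ℤ)) ((n : ℤ) - 1) ∧
          j.1 ∈ Finset.Icc (-(m : ℤ)) (-1 : ℤ)) := fun hc => hri hc.1
      have hij : ¬(i.1 = j.1) := fun he => hri (he ▸ hcjr)
      rw [dif_neg hcn, if_neg hij, map_zero]
      apply Finset.sum_eq_zero
      intro l _
      by_cases hlr : l.1 ∈ Finset.Icc (-(m : ℤ)) ((n : ℤ) - 1)
      · have hc1 : ¬(i.1 ∈ Finset.Icc (-(m : ℤ)) ((n : ℤ) - 1) ∧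
            l.1 ∈ Finset.Icc (-(m : ℤ)) ((n : ℤ) - 1)) := fun hc => hri hc.1
        have hc2 : ¬(i.1 = l.1) := fun he => hri (he ▸ hlr)
        rw [dif_neg hc1, if_neg hc2, TensorProduct.zero_tmul]
      · have hc1 : ¬(l.1 ∈ Finset.Icc (-(m : ℤ)) ((n : ℤ) - 1) ∧
            j.1 ∈ Finset.Icc (-(m : ℤ)) (-1 : ℤ)) := fun hc => hlr hc.1
        have hc2 : ¬(l.1 = j.1) := fun he => hlr (he ▸ hcjr)
        rw [dif_neg hc1, if_neg hc2, TensorProduct.tmul_zero]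
  · -- j out of range
    have hjlt : j.1 < -(m : ℤ) := by
      simp only [Finset.mem_Icc] at hcj hj'; omega
    have hjr : j.1 ∉ Finset.Icc (-(m : ℤ)) ((n : ℤ) - 1) := by
      simp only [Finset.mem_Icc]; omega
    have hcn : ¬(i.1 ∈ Finset.Icc (-(m : ℤ)) ((n : ℤ) - 1) ∧
        j.1 ∈ Finset.Icc (-(m : ℤ)) (-1 : ℤ)) := fun hc => hcj hc.2
    rw [dif_neg hcn]
    have hl0mem : j.1 ∈ Finset.Icc (-(m' : ℤ)) ((n' : ℤ) - 1) := by
      simp only [Finset.mem_Icc] at hj' ⊢; omega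
    rw [Finset.sum_eq_single (⟨j.1, hl0mem⟩ : SqIdx m' n')]
    · have hd1 : ¬((⟨j.1, hl0mem⟩ : SqIdx m' n').1 ∈ Finset.Icc (-(m : ℤ)) ((n : ℤ) - 1) ∧
          j.1 ∈ Finset.Icc (-(m : ℤ)) (-1 : ℤ)) := fun hc => hcj hc.2
      have hd0 : ¬(i.1 ∈ Finset.Icc (-(m : ℤ)) ((n : ℤ) - 1) ∧
          (⟨j.1, hl0mem⟩ : SqIdx m' n').1 ∈ Finset.Icc (-(m : ℤ)) ((n : ℤ) - 1)) :=
        fun hc => hjr hc.2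
      have he : (⟨j.1, hl0mem⟩ : SqIdx m' n').1 = j.1 := rfl
      rw [dif_neg hd1, if_pos he, dif_neg hd0]
      by_cases hij : i.1 = j.1
      · rw [if_pos hij, if_pos hij]
        exact Algebra.TensorProduct.one_def.symm.trans (coactA k m n).toRingHom.map_one.symm
      · rw [if_neg hij, if_neg hij, map_zero, TensorProduct.zero_tmul]
    · intro l _ hlne
      have hc2 : ¬(l.1 = j.1) := fun he => hlne (Subtype.ext he)
      have hc1 : ¬(l.1 ∈ Finset.Icc (-(m : ℤ)) ((n : ℤ) - 1) ∧
          j.1 ∈ Finset.Icc (-(m : ℤ)) (-1 : ℤ)) := fun hc => hcj hc.2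
      rw [dif_neg hc1, if_neg hc2, TensorProduct.tmul_zero]
    · intro hfalse
      exact absurd (Finset.mem_univ _) hfalse
/-- there is a unique ring homomorphism
`λ̂ : k̂[δ_∞] → L = lim (k[SL_{m,n}] ⊗ k[δ_{m,n}])` whose `(m,n)`-component is
`λ_{(m,n)}` applied to the `(m,n)`-component; in particular `k̂[δ_∞]` carries a
coaction of `k[SL_∞]`. -/
theorem stmt11 (k : Type) [Field k]
    (eD : ∀ p q : PIdx, p ≤ q →
      (↥(DeltaSub k q.1.1 q.1.2) →ₐ[k] ↥(DeltaSub k p.1.1 p.1.2)))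
    (heD : eProp k eD)
    (φ : ∀ p q : PIdx, p ≤ q → (SLring k q.1.1 q.1.2 →ₐ[k] SLring k p.1.1 p.1.2))
    (hφ : phiSysProp k φ)
    -- the restricted coactions `λ_{(m,n)} : k[δ_{m,n}] → k[SL_{m,n}] ⊗ k[δ_{m,n}]`
    (lam : ∀ p : PIdx,
      ↥(DeltaSub k p.1.1 p.1.2) →ₐ[k] SLring k p.1.1 p.1.2 ⊗[k] ↥(DeltaSub k p.1.1 p.1.2))
    (hlam : ∀ (p : PIdx) (x : ↥(DeltaSub k p.1.1 p.1.2)),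
      Algebra.TensorProduct.map (AlgHom.id k (SLring k p.1.1 p.1.2))
          (DeltaSub k p.1.1 p.1.2).val (lam p x) =
        coactA k p.1.1 p.1.2 (x : MatRing k p.1.1 p.1.2)) :
    ∃! lamHat : ↥(ringInvLim (fun p : PIdx => ↥(DeltaSub k p.1.1 p.1.2))
        (fun p q h => (eD p q h).toRingHom)) →+*
        ↥(ringInvLim (fun p : PIdx => SLring k p.1.1 p.1.2 ⊗[k] ↥(DeltaSub k p.1.1 p.1.2))
          (fun p q h => (Algebra.TensorProduct.map (φ p q h) (eD p q h)).toRingHom)),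
      ∀ x (p : PIdx), (lamHat x).1 p = lam p (x.1 p) := by
  have compat : ∀ x : ↥(ringInvLim (fun p : PIdx => ↥(DeltaSub k p.1.1 p.1.2))
      (fun p q h => (eD p q h).toRingHom)), ∀ (p q : PIdx) (h : p ≤ q),
      (Algebra.TensorProduct.map (φ p q h) (eD p q h)) (lam q (x.1 q)) = lam p (x.1 p) := by
    intro x p q h
    apply tensor_val_inj k (SLring k p.1.1 p.1.2) _ (DeltaSub k p.1.1 p.1.2)
    have hkey := keyComm k p.1.1 p.1.2 q.1.1 q.1.2 p.2.2 q.2.2 h.1 h.2 (φ p q h) (hφ p q h)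
    have hx : (eD p q h) (x.1 q) = x.1 p := x.2 p q h
    have e1 : (Algebra.TensorProduct.map (AlgHom.id k (SLring k p.1.1 p.1.2))
          (DeltaSub k p.1.1 p.1.2).val).comp
          (Algebra.TensorProduct.map (φ p q h) (eD p q h))
        = (Algebra.TensorProduct.map (φ p q h) (Emap k p.1.1 p.1.2 q.1.1 q.1.2)).comp
          (Algebra.TensorProduct.map (AlgHom.id k (SLring k q.1.1 q.1.2))
            (DeltaSub k q.1.1 q.1.2).val) := by
      rw [← Algebra.TensorProduct.map_comp, ← Algebra.TensorProduct.map_comp]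
      congr 1
      exact AlgHom.ext fun y => heD p q h y
    calc Algebra.TensorProduct.map (AlgHom.id k (SLring k p.1.1 p.1.2))
          (DeltaSub k p.1.1 p.1.2).val
          ((Algebra.TensorProduct.map (φ p q h) (eD p q h)) (lam q (x.1 q)))
        = (Algebra.TensorProduct.map (φ p q h) (Emap k p.1.1 p.1.2 q.1.1 q.1.2))
            (Algebra.TensorProduct.map (AlgHom.id k (SLring k q.1.1 q.1.2))
              (DeltaSub k q.1.1 q.1.2).val (lam q (x.1 q))) := by
          have := DFunLike.congr_fun e1 (lam q (x.1 q))
          simpa [AlgHom.comp_apply] using this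
      _ = (Algebra.TensorProduct.map (φ p q h) (Emap k p.1.1 p.1.2 q.1.1 q.1.2))
            (coactA k q.1.1 q.1.2 ((x.1 q : MatRing k q.1.1 q.1.2))) := by
          rw [hlam q]
      _ = coactA k p.1.1 p.1.2
            (Emap k p.1.1 p.1.2 q.1.1 q.1.2 ((x.1 q : MatRing k q.1.1 q.1.2))) := by
          have := DFunLike.congr_fun hkey ((x.1 q : MatRing k q.1.1 q.1.2))
          simpa [AlgHom.comp_apply] using this
      _ = coactA k p.1.1 p.1.2 ((eD p q h (x.1 q) : MatRing k p.1.1 p.1.2)) := by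
          rw [heD p q h]
      _ = coactA k p.1.1 p.1.2 ((x.1 p : MatRing k p.1.1 p.1.2)) := by rw [hx]
      _ = Algebra.TensorProduct.map (AlgHom.id k (SLring k p.1.1 p.1.2))
            (DeltaSub k p.1.1 p.1.2).val (lam p (x.1 p)) := (hlam p _).symm
  refine ⟨{ toFun := fun x => ⟨fun p => lam p (x.1 p), fun p q h => compat x p q h⟩
            map_one' := Subtype.ext (_root_.funext fun p => (lam p).toRingHom.map_one)
            map_mul' := fun a b => Subtype.ext (_root_.funext fun p => (lam p).toRingHom.map_mul _ _)
            map_zero' := Subtype.ext (_root_.funext fun p => (lam p).toRingHom.map_zero)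
            map_add' := fun a b => Subtype.ext (_root_.funext fun p => (lam p).toRingHom.map_add _ _) },
    fun x p => rfl, ?_⟩
  intro g hg
  exact RingHom.ext fun x => Subtype.ext (_root_.funext fun p => hg x p)

end
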